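/- Let I be an ideal of ℂ[x₁,…,x_n] and w ∈ ℂⁿ a point with h(w) = 0 for every h ∈ I. Let k ≥ 1, f ∈ Iᵏ (the k-th power of the ideal), e ≥ 1, v ∈ ℂⁿ, and p(t) = w + tᵉ·v + t^{e+1}·q(t) with q(t) an n-tuple of polynomials in ℂ[t]. Then in the polynomial F(t) = f(p(t)), the coefficient of tʲ vanishes for every j < k·e, and the coefficient of t^{k·e} equals D^k_{w,v}(f). -/
import Mathlib


open Polynomial MvPolynomial

/-- `Dk k w v f` : the coefficient of `t^k` in the one-variable polynomial `t ↦ f (w + t • v)`. -/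
noncomputable def Dk {n : ℕ} (k : ℕ) (w v : Fin n → ℂ) (f : MvPolynomial (Fin n) ℂ) : ℂ :=
  (MvPolynomial.aeval
    (fun i => Polynomial.C (w i) + Polynomial.C (v i) * Polynomial.X) f).coeff k

theorem statement11 {n : ℕ} (I : Ideal (MvPolynomial (Fin n) ℂ)) (w : Fin n → ℂ)
    (hw : ∀ h ∈ I, MvPolynomial.eval w h = 0)
    (k : ℕ) (hk : 1 ≤ k) (f : MvPolynomial (Fin n) ℂ) (hf : f ∈ I ^ k)
    (e : ℕ) (he : 1 ≤ e) (v : Fin n → ℂ) (q : Fin n → Polynomial ℂ) :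
    let F : Polynomial ℂ := MvPolynomial.aeval
      (fun i => Polynomial.C (w i) + Polynomial.C (v i) * Polynomial.X ^ e
        + q i * Polynomial.X ^ (e + 1)) f
    (∀ j : ℕ, j < k * e → F.coeff j = 0) ∧
    F.coeff (k * e) = Dk k w v f := by
  intro F
  set r : Fin n → Polynomial ℂ := fun i => Polynomial.C (v i) + q i * Polynomial.X with hr
  set Θ : MvPolynomial (Fin n) ℂ →ₐ[ℂ] Polynomial (Polynomial ℂ) :=
    MvPolynomial.aeval (fun i =>
      Polynomial.C (Polynomial.C (w i)) + Polynomial.C (r i) * Polynomial.X) with hΘ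
  -- Step 1: X ∣ Θ h for h ∈ I
  have hXdvd : ∀ h ∈ I, (Polynomial.X : Polynomial (Polynomial ℂ)) ∣ Θ h := by
    intro h hh
    rw [Polynomial.X_dvd_iff, Polynomial.coeff_zero_eq_eval_zero]
    have h1 : ((Polynomial.aeval (0 : Polynomial ℂ)).restrictScalars ℂ).comp Θ
        = MvPolynomial.aeval (fun i => Polynomial.C (w i)) := by
      rw [hΘ, MvPolynomial.comp_aeval]
      refine congrArg _ (funext fun i => ?_)
      simp
    have h2 : ((Algebra.ofId ℂ (Polynomial ℂ)).comp (MvPolynomial.aeval w))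
        = MvPolynomial.aeval (fun i => Polynomial.C (w i)) := by
      rw [MvPolynomial.comp_aeval]
      refine congrArg _ (funext fun i => ?_)
      simp [Algebra.ofId_apply, Polynomial.algebraMap_eq]
    have := congrArg (fun (φ : MvPolynomial (Fin n) ℂ →ₐ[ℂ] Polynomial ℂ) => φ h) (h1.trans h2.symm)
    simp only [AlgHom.comp_apply, AlgHom.coe_restrictScalars'] at this
    rw [show Polynomial.eval 0 (Θ h) = Polynomial.aeval (0 : Polynomial ℂ) (Θ h) by
      simp [Polynomial.aeval_def, Polynomial.eval], this]
    have : MvPolynomial.aeval w h = MvPolynomial.eval w h := by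
      rw [← MvPolynomial.coe_aeval_eq_eval]; rfl
    simp [Algebra.ofId_apply, this, hw h hh, Polynomial.algebraMap_eq]
  -- Step 2: X^k ∣ Θ f
  have hXk : (Polynomial.X : Polynomial (Polynomial ℂ)) ^ k ∣ Θ f := by
    rw [← Ideal.mem_span_singleton, ← Ideal.span_singleton_pow]
    have h1 : Ideal.map Θ.toRingHom I ≤ Ideal.span {(Polynomial.X : Polynomial (Polynomial ℂ))} :=
      Ideal.map_le_iff_le_comap.2 fun h hh => Ideal.mem_span_singleton.2 (hXdvd h hh)
    have h2 : Θ f ∈ Ideal.map Θ.toRingHom (I ^ k) := Ideal.mem_map_of_mem _ hf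
    rw [Ideal.map_pow] at h2
    exact Ideal.pow_right_mono h1 k h2
  obtain ⟨g, hg⟩ := hXk
  -- Step 3: F = eval (X^e) (Θ f)
  have hF : F = Polynomial.aeval ((Polynomial.X : Polynomial ℂ) ^ e) (Θ f) := by
    have h1 : ((Polynomial.aeval ((Polynomial.X : Polynomial ℂ) ^ e)).restrictScalars ℂ).comp Θ
        = MvPolynomial.aeval (fun i => Polynomial.C (w i) + Polynomial.C (v i) * Polynomial.X ^ e
            + q i * Polynomial.X ^ (e + 1)) := by
      rw [hΘ, MvPolynomial.comp_aeval]
      refine congrArg _ (funext fun i => ?_)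
      simp only [Polynomial.aeval_add, Polynomial.aeval_mul, Polynomial.aeval_C,
        Polynomial.aeval_X, hr]
      simp [Polynomial.algebraMap_eq]
      ring
    have := congrArg (fun (φ : MvPolynomial (Fin n) ℂ →ₐ[ℂ] Polynomial ℂ) => φ f) h1
    simp only [AlgHom.comp_apply, AlgHom.coe_restrictScalars'] at this
    exact this.symm
  -- rewrite F using g
  have hF2 : F = Polynomial.aeval ((Polynomial.X : Polynomial ℂ) ^ e) g * Polynomial.X ^ (k * e) := by
    rw [hF, hg, map_mul, map_pow, Polynomial.aeval_X, mul_comm, ← pow_mul, mul_comm e k]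
  constructor
  · intro j hj
    rw [hF2, Polynomial.coeff_mul_X_pow']
    simp [Nat.not_le.2 hj]
  · rw [hF2, Polynomial.coeff_mul_X_pow']
    simp only [le_refl, if_true, Nat.sub_self]
    -- LHS: coeff 0 of aeval (X^e) g = eval 0 (g.coeff 0)
    have hL : (Polynomial.aeval ((Polynomial.X : Polynomial ℂ) ^ e) g).coeff 0
        = Polynomial.eval 0 (g.coeff 0) := by
      rw [Polynomial.coeff_zero_eq_eval_zero]
      have : Polynomial.aeval ((Polynomial.X : Polynomial ℂ) ^ e) g
          = Polynomial.eval₂ (RingHom.id (Polynomial ℂ)) (Polynomial.X ^ e) g := by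
        rw [Polynomial.aeval_def]; congr 1
      rw [this, show Polynomial.eval (0:ℂ) = (Polynomial.evalRingHom (0:ℂ)) from rfl,
        Polynomial.hom_eval₂]
      simp only [RingHom.comp_id]
      have : Polynomial.evalRingHom (0:ℂ) ((Polynomial.X : Polynomial ℂ) ^ e) = 0 := by
        simp [zero_pow (by omega : e ≠ 0)]
      rw [this, Polynomial.eval₂_at_zero]
    -- RHS: Dk = eval 0 (g.coeff 0)
    have hR : Dk k w v f = Polynomial.eval 0 (g.coeff 0) := by
      have h1 : (Polynomial.mapAlgHom (Polynomial.aeval (0:ℂ) : Polynomial ℂ →ₐ[ℂ] ℂ)).comp Θ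
          = MvPolynomial.aeval (fun i => Polynomial.C (w i) + Polynomial.C (v i) * Polynomial.X) := by
        rw [hΘ, MvPolynomial.comp_aeval]
        refine congrArg _ (funext fun i => ?_)
        show Polynomial.map _ _ = _
        simp [hr]
      have h2 := congrArg (fun (φ : MvPolynomial (Fin n) ℂ →ₐ[ℂ] Polynomial ℂ) => (φ f).coeff k) h1
      simp only [AlgHom.comp_apply] at h2
      rw [Dk, ← h2]
      have : (Polynomial.mapAlgHom (Polynomial.aeval (0:ℂ) : Polynomial ℂ →ₐ[ℂ] ℂ)) (Θ f)
          = (Θ f).map ((Polynomial.aeval (0:ℂ) : Polynomial ℂ →ₐ[ℂ] ℂ) : Polynomial ℂ →+* ℂ) := rfl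
      rw [this, Polynomial.coeff_map, hg]
      have : (Polynomial.X ^ k * g).coeff k = g.coeff 0 := by
        simpa using Polynomial.coeff_X_pow_mul g k 0
      rw [this]
      simp
    rw [hL, hR]
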